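/- For every positive semidefinite matrix Σ, the unknown-input error covariance update satisfies the lower bound ρᵈ(Σ) ⪰ (Fᵀ R⁻¹ F)⁻¹ = (Gᵀ H G)⁻¹ with H := Cᵀ R⁻¹ C; in particular, if the largest eigenvalue of Gᵀ H G is at most λ̄_H, then ρᵈ(Σ) ⪰ λ̄_H⁻¹ I. -/

import Mathlib

open Matrix BigOperators

noncomputable section

/-- `R̃(Σ) = C (A Σ Aᵀ + Q) Cᵀ + R`. -/
def Rt {ny nz : ℕ} (A Q : Matrix (Fin ny) (Fin ny) ℝ)
    (C : Matrix (Fin nz) (Fin ny) ℝ) (R : Matrix (Fin nz) (Fin nz) ℝ)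
    (S : Matrix (Fin ny) (Fin ny) ℝ) : Matrix (Fin nz) (Fin nz) ℝ :=
  C * (A * S * Aᵀ + Q) * Cᵀ + R

/-- Optimal unknown-input filter gain `M(Σ)`. -/
def Mg {ny nz nd : ℕ} (A Q : Matrix (Fin ny) (Fin ny) ℝ) (G : Matrix (Fin ny) (Fin nd) ℝ)
    (C : Matrix (Fin nz) (Fin ny) ℝ) (R : Matrix (Fin nz) (Fin nz) ℝ)
    (S : Matrix (Fin ny) (Fin ny) ℝ) : Matrix (Fin nd) (Fin nz) ℝ :=
  ((C * G)ᵀ * (Rt A Q C R S)⁻¹ * (C * G))⁻¹ * (C * G)ᵀ * (Rt A Q C R S)⁻¹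

/-- Optimal state filter gain `K(Σ)`. -/
def Kg {ny nz : ℕ} (A Q : Matrix (Fin ny) (Fin ny) ℝ)
    (C : Matrix (Fin nz) (Fin ny) ℝ) (R : Matrix (Fin nz) (Fin nz) ℝ)
    (S : Matrix (Fin ny) (Fin ny) ℝ) : Matrix (Fin ny) (Fin nz) ℝ :=
  (A * S * Aᵀ + Q) * Cᵀ * (Rt A Q C R S)⁻¹

/-- Closed loop matrix `Ã(Σ)`. -/
def Atil {ny nz nd : ℕ} (A Q : Matrix (Fin ny) (Fin ny) ℝ) (G : Matrix (Fin ny) (Fin nd) ℝ)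
    (C : Matrix (Fin nz) (Fin ny) ℝ) (R : Matrix (Fin nz) (Fin nz) ℝ)
    (S : Matrix (Fin ny) (Fin ny) ℝ) : Matrix (Fin ny) (Fin ny) ℝ :=
  (1 - Kg A Q C R S * C) * (1 - G * Mg A Q G C R S * C) * A

/-- `F̃(Σ)`. -/
def Ftil {ny nz nd : ℕ} (A Q : Matrix (Fin ny) (Fin ny) ℝ) (G : Matrix (Fin ny) (Fin nd) ℝ)
    (C : Matrix (Fin nz) (Fin ny) ℝ) (R : Matrix (Fin nz) (Fin nz) ℝ)
    (S : Matrix (Fin ny) (Fin ny) ℝ) : Matrix (Fin ny) (Fin ny) ℝ :=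
  -((1 - Kg A Q C R S * C) * (1 - G * Mg A Q G C R S * C))

/-- `W̃(Σ)`. -/
def Wtil {ny nz nd : ℕ} (A Q : Matrix (Fin ny) (Fin ny) ℝ) (G : Matrix (Fin ny) (Fin nd) ℝ)
    (C : Matrix (Fin nz) (Fin ny) ℝ) (R : Matrix (Fin nz) (Fin nz) ℝ)
    (S : Matrix (Fin ny) (Fin ny) ℝ) : Matrix (Fin ny) (Fin nz) ℝ :=
  G * Mg A Q G C R S - Kg A Q C R S * C * G * Mg A Q G C R S + Kg A Q C R S

/-- The state error covariance update map `ρ(Σ)`. -/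
def rho {ny nz nd : ℕ} (A Q : Matrix (Fin ny) (Fin ny) ℝ) (G : Matrix (Fin ny) (Fin nd) ℝ)
    (C : Matrix (Fin nz) (Fin ny) ℝ) (R : Matrix (Fin nz) (Fin nz) ℝ)
    (S : Matrix (Fin ny) (Fin ny) ℝ) : Matrix (Fin ny) (Fin ny) ℝ :=
  Atil A Q G C R S * S * (Atil A Q G C R S)ᵀ
    + Ftil A Q G C R S * Q * (Ftil A Q G C R S)ᵀ
    + Wtil A Q G C R S * R * (Wtil A Q G C R S)ᵀ

/-- The unknown-input error covariance update map `ρᵈ(Σ)`. -/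
def rhod {ny nz nd : ℕ} (A Q : Matrix (Fin ny) (Fin ny) ℝ) (G : Matrix (Fin ny) (Fin nd) ℝ)
    (C : Matrix (Fin nz) (Fin ny) ℝ) (R : Matrix (Fin nz) (Fin nz) ℝ)
    (S : Matrix (Fin ny) (Fin ny) ℝ) : Matrix (Fin nd) (Fin nd) ℝ :=
  ((C * G)ᵀ * (Rt A Q C R S)⁻¹ * (C * G))⁻¹


section Helpers

open Matrix

/-- Full column rank implies injectivity of `mulVec`. -/
lemma aux_mulVec_injective {m n : ℕ} (F : Matrix (Fin m) (Fin n) ℝ)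
    (h : F.rank = n) : Function.Injective F.mulVecLin := by
  rw [← LinearMap.ker_eq_bot]
  have h2 := LinearMap.finrank_range_add_finrank_ker F.mulVecLin
  rw [Matrix.rank] at h
  rw [h, Module.finrank_fin_fun] at h2
  exact Submodule.finrank_eq_zero.mp (by omega)

/-- `Fᵀ M F` is positive definite when `M` is and `F` has full column rank. -/
lemma aux_posDef_conj {m n : ℕ} {M : Matrix (Fin m) (Fin m) ℝ} (hM : M.PosDef)
    (F : Matrix (Fin m) (Fin n) ℝ) (hF : F.rank = n) :
    (Fᵀ * M * F).PosDef := by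
  have hT : Fᴴ = Fᵀ := by ext i j; simp [Matrix.conjTranspose_apply]
  refine Matrix.PosDef.of_dotProduct_mulVec_pos ?_ (fun x hx => ?_)
  · have := (hM.posSemidef.conjTranspose_mul_mul_same F).isHermitian
    rwa [hT] at this
  · have hFx : F *ᵥ x ≠ 0 := fun hc => hx <| by
      have := aux_mulVec_injective F hF (a₁ := x) (a₂ := 0)
      simpa using this (by simpa [Matrix.mulVecLin_apply] using hc)
    have := hM.dotProduct_mulVec_pos hFx
    calc (0:ℝ) < star (F *ᵥ x) ⬝ᵥ M *ᵥ (F *ᵥ x) := this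
    _ = star x ⬝ᵥ (Fᵀ * M * F) *ᵥ x := by
        rw [← Matrix.mulVec_mulVec, ← Matrix.mulVec_mulVec,
          Matrix.dotProduct_mulVec (star x), Matrix.vecMul_transpose]
        congr 1

/-- Inverse is antitone on positive definite matrices. -/
lemma aux_inv_antitone {n : ℕ} {A B : Matrix (Fin n) (Fin n) ℝ}
    (hA : A.PosDef) (hB : B.PosDef) (h : (A - B).PosSemidef) :
    (B⁻¹ - A⁻¹).PosSemidef := by
  letI := hA.isUnit.invertible
  letI := hB.isUnit.invertible
  have key : B⁻¹ - A⁻¹ = A⁻¹ * (A - B) * A⁻¹ + (B⁻¹ - A⁻¹) * B * (B⁻¹ - A⁻¹) := by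
    simp only [Matrix.sub_mul, Matrix.mul_sub, Matrix.mul_assoc,
      Matrix.inv_mul_cancel_left_of_invertible, Matrix.mul_inv_of_invertible,
      Matrix.inv_mul_of_invertible, Matrix.mul_one, Matrix.one_mul]
    abel
  have h1 : (A⁻¹ * (A - B) * A⁻¹).PosSemidef := by
    have := h.conjTranspose_mul_mul_same A⁻¹
    rwa [hA.isHermitian.inv.eq] at this
  have h2 : ((B⁻¹ - A⁻¹) * B * (B⁻¹ - A⁻¹)).PosSemidef := by
    have := hB.posSemidef.conjTranspose_mul_mul_same (B⁻¹ - A⁻¹)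
    rwa [(hB.isHermitian.inv.sub hA.isHermitian.inv).eq] at this
  rw [key]
  exact h1.add h2

end Helpers

/-- for every PSD `Σ`, `ρᵈ(Σ) ⪰ (Fᵀ R⁻¹ F)⁻¹ = (Gᵀ H G)⁻¹` with
`H = Cᵀ R⁻¹ C`; and if the largest eigenvalue of `Gᵀ H G` is at most `λ̄_H`
(i.e. `Gᵀ H G ⪯ λ̄_H I`), then `ρᵈ(Σ) ⪰ λ̄_H⁻¹ I`. -/
theorem input_update_lower_bound {ny nz nd : ℕ}
    (A Q : Matrix (Fin ny) (Fin ny) ℝ) (G : Matrix (Fin ny) (Fin nd) ℝ)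
    (C : Matrix (Fin nz) (Fin ny) ℝ) (R : Matrix (Fin nz) (Fin nz) ℝ)
    (hQ : Q.PosDef) (hR : R.PosDef) (hF : (C * G).rank = nd)
    (S : Matrix (Fin ny) (Fin ny) ℝ) (hS : S.PosSemidef) :
    (rhod A Q G C R S - ((C * G)ᵀ * R⁻¹ * (C * G))⁻¹).PosSemidef ∧
    ((C * G)ᵀ * R⁻¹ * (C * G))⁻¹ = (Gᵀ * (Cᵀ * R⁻¹ * C) * G)⁻¹ ∧
    ∀ lamH : ℝ,
      (lamH • (1 : Matrix (Fin nd) (Fin nd) ℝ) - Gᵀ * (Cᵀ * R⁻¹ * C) * G).PosSemidef →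
      (rhod A Q G C R S - lamH⁻¹ • (1 : Matrix (Fin nd) (Fin nd) ℝ)).PosSemidef := by
  have hT : ∀ {p q : ℕ} (M : Matrix (Fin p) (Fin q) ℝ), Mᴴ = Mᵀ := by
    intro p q M; ext i j; simp [Matrix.conjTranspose_apply]
  have hMid : (A * S * Aᵀ + Q).PosSemidef := by
    have h1 : (A * S * Aᵀ).PosSemidef := by
      have := hS.mul_mul_conjTranspose_same A
      rwa [hT A] at this
    exact (Matrix.PosDef.posSemidef_add h1 hQ).posSemidef
  have hCMC : (C * (A * S * Aᵀ + Q) * Cᵀ).PosSemidef := by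
    have h1 : (A * S * Aᵀ + Q).PosSemidef := hMid
    have := h1.mul_mul_conjTranspose_same C
    rwa [hT C] at this
  have hRt : (Rt A Q C R S).PosDef := Matrix.PosDef.posSemidef_add hCMC hR
  have hRtR : (Rt A Q C R S - R).PosSemidef := by
    have : Rt A Q C R S - R = C * (A * S * Aᵀ + Q) * Cᵀ := by
      simp [Rt]
    rw [this]; exact hCMC
  have hinv : (R⁻¹ - (Rt A Q C R S)⁻¹).PosSemidef := aux_inv_antitone hRt hR hRtR
  have hFRF : ((C * G)ᵀ * R⁻¹ * (C * G)).PosDef := aux_posDef_conj hR.inv (C * G) hF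
  have hFRtF : ((C * G)ᵀ * (Rt A Q C R S)⁻¹ * (C * G)).PosDef :=
    aux_posDef_conj hRt.inv (C * G) hF
  have hdiff : ((C * G)ᵀ * R⁻¹ * (C * G)
      - (C * G)ᵀ * (Rt A Q C R S)⁻¹ * (C * G)).PosSemidef := by
    have := hinv.conjTranspose_mul_mul_same (C * G)
    rw [hT (C * G)] at this
    simpa [Matrix.mul_sub, Matrix.sub_mul] using this
  have part1 : (rhod A Q G C R S - ((C * G)ᵀ * R⁻¹ * (C * G))⁻¹).PosSemidef :=
    aux_inv_antitone hFRF hFRtF hdiff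
  have part2 : ((C * G)ᵀ * R⁻¹ * (C * G))⁻¹ = (Gᵀ * (Cᵀ * R⁻¹ * C) * G)⁻¹ := by
    rw [Matrix.transpose_mul]
    simp [Matrix.mul_assoc]
  refine ⟨part1, part2, fun lamH hlam => ?_⟩
  rcases Nat.eq_zero_or_pos nd with h0 | hnd
  · subst h0
    exact Matrix.PosSemidef.of_dotProduct_mulVec_nonneg (Matrix.ext fun i _ => i.elim0) fun x => by simp [dotProduct]
  · have hNpd : (Gᵀ * (Cᵀ * R⁻¹ * C) * G).PosDef := by
      have : Gᵀ * (Cᵀ * R⁻¹ * C) * G = (C * G)ᵀ * R⁻¹ * (C * G) := by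
        rw [Matrix.transpose_mul]; simp [Matrix.mul_assoc]
      rw [this]; exact hFRF
    obtain ⟨i⟩ : Nonempty (Fin nd) := ⟨⟨0, hnd⟩⟩
    have hvne : (Pi.single i 1 : Fin nd → ℝ) ≠ 0 := fun hc => by
      have := congrFun hc i
      simp at this
    have hq := hNpd.dotProduct_mulVec_pos hvne
    have hv := hlam.dotProduct_mulVec_nonneg (Pi.single i 1)
    have hexp : star (Pi.single i (1:ℝ)) ⬝ᵥ
        ((lamH • (1 : Matrix (Fin nd) (Fin nd) ℝ) - Gᵀ * (Cᵀ * R⁻¹ * C) * G) *ᵥ Pi.single i 1)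
        = lamH - star (Pi.single i (1:ℝ)) ⬝ᵥ ((Gᵀ * (Cᵀ * R⁻¹ * C) * G) *ᵥ Pi.single i 1) := by
      rw [Matrix.sub_mulVec, dotProduct_sub, Matrix.smul_mulVec, Matrix.one_mulVec]
      congr 1
      simp [dotProduct_smul]
    rw [hexp] at hv
    have hlampos : 0 < lamH := lt_of_lt_of_le hq (by linarith)
    have hlamI : (lamH • (1 : Matrix (Fin nd) (Fin nd) ℝ)).PosDef := by
      refine Matrix.PosDef.of_dotProduct_mulVec_pos (by simp [Matrix.IsHermitian]) fun x hx => ?_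
      rw [Matrix.smul_mulVec, Matrix.one_mulVec, dotProduct_smul, smul_eq_mul]
      exact mul_pos hlampos (Matrix.dotProduct_star_self_pos_iff.mpr hx)
    have h3 := aux_inv_antitone hlamI hNpd hlam
    have hinv1 : (lamH • (1 : Matrix (Fin nd) (Fin nd) ℝ))⁻¹ = lamH⁻¹ • 1 := by
      apply Matrix.inv_eq_right_inv
      rw [Matrix.smul_mul, Matrix.mul_smul, smul_smul, Matrix.one_mul,
        mul_inv_cancel₀ hlampos.ne']
      simp
    rw [hinv1] at h3
    have part1' : (rhod A Q G C R S - (Gᵀ * (Cᵀ * R⁻¹ * C) * G)⁻¹).PosSemidef := by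
      rw [← part2]; exact part1
    have hsum := part1'.add h3
    have : rhod A Q G C R S - lamH⁻¹ • (1 : Matrix (Fin nd) (Fin nd) ℝ)
        = (rhod A Q G C R S - (Gᵀ * (Cᵀ * R⁻¹ * C) * G)⁻¹)
          + ((Gᵀ * (Cᵀ * R⁻¹ * C) * G)⁻¹ - lamH⁻¹ • 1) := by abel
    rw [this]
    exact hsum
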